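/- Taylor's theorem with remainder for matricial functions (Banach algebra model): let f be an intertwiner-preserving function on block matrices over B(H), and suppose the (n+1)×(n+1) block matrix A with diagonal (z, z, …, z, z+w) and superdiagonal (w, …, w) lies in the domain. Then f(z+w) = ∑_{k=0}^{n-1} Δ^k f(z)(w,…,w) + Δⁿ f(z,…,z, z+w)(w,…,w), where Δ^k f(z₀,…,z_k)(u₁,…,u_k) is defined as the (0,k)-corner of f applied to the bidiagonal block matrix with diagonal z₀,…,z_k and superdiagonal u₁,…,u_k. -/

import Mathlib

variable {A : Type*} [NormedRing A] [NormedAlgebra ℂ A]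

/-- A block-scalar rectangular matrix: a scalar matrix amplified into the algebra `A`. -/
noncomputable def blkScalar {m n : ℕ} (A : Type*) [NormedRing A] [NormedAlgebra ℂ A]
    (s : Matrix (Fin m) (Fin n) ℂ) : Matrix (Fin m) (Fin n) A :=
  s.map (algebraMap ℂ A)

/-- The `(k+1)×(k+1)` bidiagonal block matrix with diagonal `d` and superdiagonal `u`. -/
def bidiag (k : ℕ) (d : Fin (k + 1) → A) (u : Fin k → A) :
    Matrix (Fin (k + 1)) (Fin (k + 1)) A :=
  Matrix.of fun i j =>
    if (j : ℕ) = (i : ℕ) then d i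
    else if h : (j : ℕ) = (i : ℕ) + 1 then u ⟨i, by have := j.isLt; omega⟩ else 0

/-- The `k`-th order Taylor difference operator `Δᵏf(z₀,…,z_k)(u₁,…,u_k)`: the `(0,k)`-corner
of `f` applied to the bidiagonal matrix with diagonal `z₀,…,z_k` and superdiagonal
`u₁,…,u_k`. -/
def TaylorDelta (f : ∀ n : ℕ, Matrix (Fin n) (Fin n) A → Matrix (Fin n) (Fin n) A)
    (k : ℕ) (d : Fin (k + 1) → A) (u : Fin k → A) : A :=
  f (k + 1) (bidiag k d u) 0 (Fin.last k)

/-- Lemma 5.9: the `(0,j)` entry of `f` of a bidiagonal matrix equals the corner of `f`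
applied to the truncated bidiagonal matrix. -/
lemma corner_eq
    (f : ∀ n : ℕ, Matrix (Fin n) (Fin n) A → Matrix (Fin n) (Fin n) A)
    (hf : ∀ (m n : ℕ) (s : Matrix (Fin m) (Fin n) ℂ)
        (X : Matrix (Fin n) (Fin n) A) (Y : Matrix (Fin m) (Fin m) A),
      blkScalar A s * X = Y * blkScalar A s →
      blkScalar A s * f n X = f m Y * blkScalar A s)
    (n j : ℕ) (hj : j ≤ n) (d : Fin (n + 1) → A) (u : Fin n → A) :
    f (n + 1) (bidiag n d u) 0 ⟨j, Nat.lt_succ_of_le hj⟩ =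
      f (j + 1) (bidiag j (fun i => d ⟨i, by omega⟩) (fun i => u ⟨i, by omega⟩))
        0 (Fin.last j) := by
  set Q : Matrix (Fin (n + 1)) (Fin (j + 1)) ℂ :=
    Matrix.of fun a b => if (a : ℕ) = (b : ℕ) then 1 else 0 with hQ
  set S := bidiag j (fun i : Fin (j + 1) => d ⟨i, by omega⟩)
      (fun i : Fin j => u ⟨i, by omega⟩) with hS
  have key : blkScalar A Q * S = bidiag n d u * blkScalar A Q := by
    ext a b
    have hL : (blkScalar A Q * S) a b =
        if h : (a : ℕ) ≤ j then S ⟨a, by omega⟩ b else 0 := by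
      rw [Matrix.mul_apply]
      by_cases h : (a : ℕ) ≤ j
      · rw [dif_pos h]
        rw [Finset.sum_eq_single (⟨(a : ℕ), by omega⟩ : Fin (j + 1))]
        · simp [blkScalar, hQ]
        · intro c _ hc
          have : (a : ℕ) ≠ (c : ℕ) := by
            intro he; apply hc; exact Fin.ext he.symm
          simp [blkScalar, hQ, this]
        · simp
      · rw [dif_neg h]
        apply Finset.sum_eq_zero
        intro c _
        have : (a : ℕ) ≠ (c : ℕ) := by omega
        simp [blkScalar, hQ, this]
    have hR : (bidiag n d u * blkScalar A Q) a b =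
        bidiag n d u a ⟨(b : ℕ), by omega⟩ := by
      rw [Matrix.mul_apply]
      rw [Finset.sum_eq_single (⟨(b : ℕ), by omega⟩ : Fin (n + 1))]
      · simp [blkScalar, hQ]
      · intro c _ hc
        have : (c : ℕ) ≠ (b : ℕ) := by
          intro he; apply hc; exact Fin.ext he
        simp [blkScalar, hQ, this]
      · simp
    rw [hL, hR]
    by_cases h : (a : ℕ) ≤ j
    · rw [dif_pos h]
      simp only [hS, bidiag, Matrix.of_apply]
    · rw [dif_neg h]
      have h1 : (b : ℕ) ≠ (a : ℕ) := by omega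
      have h2 : (b : ℕ) ≠ (a : ℕ) + 1 := by omega
      simp [bidiag, h1, h2]
  have main := hf (n + 1) (j + 1) Q S (bidiag n d u) key
  have := congrFun (congrFun main 0) (Fin.last j)
  have hL : (blkScalar A Q * f (j + 1) S) 0 (Fin.last j) =
      f (j + 1) S 0 (Fin.last j) := by
    rw [Matrix.mul_apply]
    rw [Finset.sum_eq_single (0 : Fin (j + 1))]
    · simp [blkScalar, hQ]
    · intro c _ hc
      have : ¬((0 : ℕ) = (c : ℕ)) := by
        intro he; exact hc (Fin.ext he.symm)
      simp [blkScalar, hQ, this]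
    · simp
  have hR : (f (n + 1) (bidiag n d u) * blkScalar A Q) 0 (Fin.last j) =
      f (n + 1) (bidiag n d u) 0 ⟨j, Nat.lt_succ_of_le hj⟩ := by
    rw [Matrix.mul_apply]
    rw [Finset.sum_eq_single (⟨j, Nat.lt_succ_of_le hj⟩ : Fin (n + 1))]
    · simp [blkScalar, hQ, Fin.last]
    · intro c _ hc
      have : ¬((c : ℕ) = j) := by
        intro he; exact hc (Fin.ext he)
      simp [blkScalar, hQ, this]
    · simp
  rw [hL, hR] at this
  exact this.symm

/-- Taylor's theorem with remainder for matricial functions (Theorem 5.10 of the paper),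
in the Banach-algebra model: if `f` preserves all block-scalar intertwiners, then
`f(z+w) = ∑_{k=0}^{n-1} Δᵏf(z)(w,…,w) + Δⁿf(z,…,z,z+w)(w,…,w)`. -/
theorem stmt8
    (f : ∀ n : ℕ, Matrix (Fin n) (Fin n) A → Matrix (Fin n) (Fin n) A)
    (hf : ∀ (m n : ℕ) (s : Matrix (Fin m) (Fin n) ℂ)
        (X : Matrix (Fin n) (Fin n) A) (Y : Matrix (Fin m) (Fin m) A),
      blkScalar A s * X = Y * blkScalar A s →
      blkScalar A s * f n X = f m Y * blkScalar A s)
    (n : ℕ) (z w : A) :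
    (f 1 !![z + w]) 0 0 =
      (∑ k ∈ Finset.range n, TaylorDelta f k (fun _ => z) (fun _ => w)) +
        TaylorDelta f n (fun i => if (i : ℕ) = n then z + w else z) (fun _ => w) := by
  set D : Fin (n + 1) → A := fun i => if (i : ℕ) = n then z + w else z with hD
  set B := bidiag n D (fun _ => w) with hB
  set c : Matrix (Fin (n + 1)) (Fin 1) ℂ := Matrix.of fun _ _ => 1 with hc
  have key : blkScalar A c * !![z + w] = B * blkScalar A c := by
    ext a b
    have hb : b = 0 := Subsingleton.elim _ _
    subst hb
    have hL : (blkScalar A c * !![z + w]) a 0 = z + w := by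
      rw [Matrix.mul_apply]
      simp [blkScalar, hc]
    have hR : (B * blkScalar A c) a 0 = ∑ l, B a l := by
      rw [Matrix.mul_apply]
      simp [blkScalar, hc]
    rw [hL, hR]
    by_cases ha : (a : ℕ) < n
    · have h1 : (⟨(a : ℕ), by omega⟩ : Fin (n + 1)) ≠
          (⟨(a : ℕ) + 1, by omega⟩ : Fin (n + 1)) := by
        intro he; have := congrArg Fin.val he; simp at this
      rw [Finset.sum_eq_add_of_mem (⟨(a : ℕ), by omega⟩ : Fin (n + 1))
          (⟨(a : ℕ) + 1, by omega⟩ : Fin (n + 1)) (Finset.mem_univ _) (Finset.mem_univ _) h1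
          (by
            intro l _ hl
            have h2 : (l : ℕ) ≠ (a : ℕ) := by
              intro he; exact hl.1 (Fin.ext he)
            have h3 : (l : ℕ) ≠ (a : ℕ) + 1 := by
              intro he; exact hl.2 (Fin.ext he)
            simp [hB, bidiag, h2, h3])]
      have e1 : B a (⟨(a : ℕ), by omega⟩ : Fin (n + 1)) = z := by
        simp only [hB, bidiag, Matrix.of_apply]
        simp only [if_true, hD]
        rw [if_neg (show ¬((a : ℕ) = n) by omega)]
      have e2 : B a (⟨(a : ℕ) + 1, by omega⟩ : Fin (n + 1)) = w := by
        simp only [hB, bidiag, Matrix.of_apply]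
        rw [if_neg (show ¬((a : ℕ) + 1 = (a : ℕ)) by omega)]
        simp
      rw [e1, e2]
    · have han : (a : ℕ) = n := by omega
      rw [Finset.sum_eq_single a]
      · simp [hB, bidiag, hD, han]
      · intro l _ hl
        have h2 : (l : ℕ) ≠ (a : ℕ) := by
          intro he; exact hl (Fin.ext he)
        have h3 : (l : ℕ) ≠ (a : ℕ) + 1 := by
          have := l.isLt; omega
        simp [hB, bidiag, h2, h3]
      · simp
  have main := hf (n + 1) 1 c !![z + w] B key
  have heq := congrFun (congrFun main 0) 0
  have hL : (blkScalar A c * f 1 !![z + w]) 0 0 = f 1 !![z + w] 0 0 := by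
    rw [Matrix.mul_apply]
    simp [blkScalar, hc]
  have hR : (f (n + 1) B * blkScalar A c) 0 0 = ∑ a, f (n + 1) B 0 a := by
    rw [Matrix.mul_apply]
    simp [blkScalar, hc]
  rw [hL, hR] at heq
  rw [heq, Fin.sum_univ_castSucc]
  congr 1
  · rw [← Fin.sum_univ_eq_sum_range]
    apply Finset.sum_congr rfl
    intro i _
    have hcast : (Fin.castSucc i) = (⟨(i : ℕ), Nat.lt_succ_of_le (le_of_lt i.isLt)⟩ :
        Fin (n + 1)) := Fin.ext rfl
    rw [hcast, corner_eq f hf n i (le_of_lt i.isLt) D (fun _ => w)]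
    have hdz : (fun k : Fin ((i : ℕ) + 1) => D ⟨(k : ℕ), by omega⟩) =
        (fun _ => z) := by
      funext k
      have hk : ¬((k : ℕ) = n) := by have := k.isLt; have := i.isLt; omega
      simp [hD, hk]
    unfold TaylorDelta
    rw [hdz]
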